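/- For the quadratic Lie superalgebra g₄,₁ = ℂX₀ ⊕ ℂY₀ ⊕ ℂX₁ ⊕ ℂY₁ with nonzero brackets [Y₁,Y₁] = -2X₀ and [Y₀,Y₁] = -2X₁, the second cohomology group H²(g₄,₁, ℂ) with trivial coefficients is 2-dimensional, spanned by the classes of Y₀* ⊗ X₁* and X₁*Y₁* - 2 X₀* ∧ Y₀*. -/

import Mathlib

/-- A bilinear scalar-valued map, given as a bare function. -/
def IsBilinC {M N : Type*} [AddCommGroup M] [Module ℂ M] [AddCommGroup N] [Module ℂ N]
    (f : M → N → ℂ) : Prop :=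
  (∀ (c : ℂ) (x y : M) (z : N), f (c • x + y) z = c * f x z + f y z) ∧
  (∀ (c : ℂ) (x : M) (y z : N), f x (c • y + z) = c * f x y + f x z)

/-- A linear scalar-valued map, given as a bare function. -/
def IsLinC {M : Type*} [AddCommGroup M] [Module ℂ M] (f : M → ℂ) : Prop :=
  ∀ (c : ℂ) (x y : M), f (c • x + y) = c * f x + f y

/- The elementary quadratic Lie superalgebra `g₄,₁ˢ`: even part `ℂX₀ ⊕ ℂY₀`,
odd part `ℂX₁ ⊕ ℂY₁`, nonzero brackets `[Y₁,Y₁] = -2X₀`, `[Y₀,Y₁] = -2X₁`. -/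

/-- even-even bracket of `g₄,₁` (zero). -/

lemma lin_eval {f : ℂ × ℂ → ℂ} (hf : IsLinC f) (A : ℂ × ℂ) :
    f A = A.1 * f (1,0) + A.2 * f (0,1) := by
  have hz : f 0 = 0 := by
    have h := hf (-1) 0 0
    simp at h
    linear_combination h
  have h1 := hf A.1 (1,0) (0, A.2)
  have h2 := hf A.2 (0,1) (0,0)
  simp [Prod.smul_mk, Prod.mk_add_mk] at h1 h2
  rw [h2, show ((0:ℂ), (0:ℂ)) = (0 : ℂ × ℂ) from rfl, hz] at h1
  linear_combination h1

lemma bilin_eval {f : ℂ × ℂ → ℂ × ℂ → ℂ} (hf : IsBilinC f) (A U : ℂ × ℂ) :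
    f A U = A.1 * U.1 * f (1,0) (1,0) + A.1 * U.2 * f (1,0) (0,1)
      + A.2 * U.1 * f (0,1) (1,0) + A.2 * U.2 * f (0,1) (0,1) := by
  obtain ⟨h1, h2⟩ := hf
  have row : ∀ B : ℂ × ℂ, IsLinC (f B) := fun B c x y => h2 c B x y
  have col : IsLinC (fun B => f B U) := fun c x y => h1 c x y U
  have e := lin_eval col A
  rw [e, lin_eval (row (1,0)) U, lin_eval (row (0,1)) U]
  ring

def br00 : ℂ × ℂ → ℂ × ℂ → ℂ × ℂ := fun _ _ => (0, 0)

/-- even-odd bracket of `g₄,₁`: `[Y₀,Y₁] = -2X₁`. -/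
def br01 : ℂ × ℂ → ℂ × ℂ → ℂ × ℂ := fun A U => (-(2 * A.2 * U.2), 0)

/-- odd-odd bracket of `g₄,₁`: `[Y₁,Y₁] = -2X₀` (symmetric). -/
def br11 : ℂ × ℂ → ℂ × ℂ → ℂ × ℂ := fun U V => (-(2 * U.2 * V.2), 0)

/-- A 2-cocycle of `g₄,₁` with trivial coefficients. -/
def IsCocycle2 (w0 : ℂ × ℂ → ℂ × ℂ → ℂ) (wm : ℂ × ℂ → ℂ × ℂ → ℂ)
    (w1 : ℂ × ℂ → ℂ × ℂ → ℂ) : Prop :=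
  IsBilinC w0 ∧ IsBilinC wm ∧ IsBilinC w1 ∧
  (∀ A B, w0 A B = - w0 B A) ∧ (∀ U V, w1 U V = w1 V U) ∧
  (∀ A B C, - w0 (br00 A B) C + w0 (br00 A C) B + w0 A (br00 B C) = 0) ∧
  (∀ A B U, - wm (br00 A B) U - wm B (br01 A U) + wm A (br01 B U) = 0) ∧
  (∀ A U V, - w1 (br01 A U) V - w1 (br01 A V) U + w0 A (br11 U V) = 0) ∧
  (∀ U V W, wm (br11 U V) W + wm (br11 U W) V + wm (br11 V W) U = 0)

/-- A 2-coboundary of `g₄,₁`. -/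
def IsCoboundary2 (w0 : ℂ × ℂ → ℂ × ℂ → ℂ) (wm : ℂ × ℂ → ℂ × ℂ → ℂ)
    (w1 : ℂ × ℂ → ℂ × ℂ → ℂ) : Prop :=
  ∃ (f0 : ℂ × ℂ → ℂ) (f1 : ℂ × ℂ → ℂ), IsLinC f0 ∧ IsLinC f1 ∧
    (∀ A B, w0 A B = - f0 (br00 A B)) ∧
    (∀ A U, wm A U = - f1 (br01 A U)) ∧
    (∀ U V, w1 U V = - f0 (br11 U V))

/-- The mixed component of the cocycle `Y₀* ⊗ X₁*`. -/
def wAm : ℂ × ℂ → ℂ × ℂ → ℂ := fun A U => A.2 * U.1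

/-- The even component of the cocycle `X₁*Y₁* - 2X₀* ∧ Y₀*`. -/
def wB0 : ℂ × ℂ → ℂ × ℂ → ℂ := fun A B => -(2 * (A.1 * B.2 - A.2 * B.1))

/-- The odd component of the cocycle `X₁*Y₁* - 2X₀* ∧ Y₀*`. -/
def wB1 : ℂ × ℂ → ℂ × ℂ → ℂ := fun U V => U.1 * V.2 + U.2 * V.1

/-- `H²(g₄,₁ˢ, ℂ)` is two-dimensional, spanned by the classes of `Y₀* ⊗ X₁*` and of
`X₁*Y₁* - 2X₀* ∧ Y₀*`: both are cocycles, every cocycle is a linear combination of them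
modulo coboundaries, and no nontrivial linear combination of them is a coboundary. -/
theorem second_cohomology_g41 :
    IsCocycle2 (fun _ _ => 0) wAm (fun _ _ => 0) ∧
    IsCocycle2 wB0 (fun _ _ => 0) wB1 ∧
    (∀ w0 wm w1, IsCocycle2 w0 wm w1 → ∃ a b : ℂ,
      IsCoboundary2 (fun A B => w0 A B - b * wB0 A B)
        (fun A U => wm A U - a * wAm A U)
        (fun U V => w1 U V - b * wB1 U V)) ∧
    (∀ a b : ℂ,
      IsCoboundary2 (fun A B => b * wB0 A B) (fun A U => a * wAm A U)
        (fun U V => b * wB1 U V) → a = 0 ∧ b = 0) := by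
  refine ⟨?_, ?_, ?_, ?_⟩
  · refine ⟨⟨?_, ?_⟩, ⟨?_, ?_⟩, ⟨?_, ?_⟩, ?_, ?_, ?_, ?_, ?_, ?_⟩ <;>
      intros <;> simp [wAm, br00, br01, br11] <;> ring
  · refine ⟨⟨?_, ?_⟩, ⟨?_, ?_⟩, ⟨?_, ?_⟩, ?_, ?_, ?_, ?_, ?_, ?_⟩ <;>
      intros <;> simp [wB0, wB1, br00, br01, br11] <;> ring
  · intro w0 wm w1 h
    obtain ⟨hb0, hbm, hb1, hanti, hsym, -, h7, h8, h9⟩ := h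
    have E0 := bilin_eval hb0
    have Em := bilin_eval hbm
    have E1 := bilin_eval hb1
    have hm11 : wm (1,0) (1,0) = 0 := by
      have h := h7 (0,1) (1,0) (0,1)
      rw [Em (br00 (0,1) (1,0)) (0,1), Em (1,0) (br01 (0,1) (0,1)),
        Em (0,1) (br01 (1,0) (0,1))] at h
      simp [br00, br01] at h
      linear_combination h
    have hm12 : wm (1,0) (0,1) = 0 := by
      have h := h9 (0,1) (0,1) (0,1)
      rw [Em (br11 (0,1) (0,1)) (0,1)] at h
      simp [br11] at h
      linear_combination -h / 6
    have hs11 : w1 (1,0) (1,0) = 0 := by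
      have h := h8 (0,1) (0,1) (1,0)
      rw [E1 (br01 (0,1) (0,1)) (1,0), E1 (br01 (0,1) (1,0)) (0,1),
        E0 (0,1) (br11 (0,1) (1,0))] at h
      simp [br01, br11] at h
      linear_combination h
    have hsb : w1 (0,1) (1,0) = w1 (1,0) (0,1) := hsym (0,1) (1,0)
    have hd1 : w0 (1,0) (1,0) = 0 := by
      have h := hanti (1,0) (1,0); linear_combination h / 2
    have hd2 : w0 (0,1) (0,1) = 0 := by
      have h := hanti (0,1) (0,1); linear_combination h / 2
    have hc10 : w0 (0,1) (1,0) = 2 * w1 (1,0) (0,1) := by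
      have h := h8 (0,1) (0,1) (0,1)
      rw [E1 (br01 (0,1) (0,1)) (0,1), E0 (0,1) (br11 (0,1) (0,1))] at h
      simp [br01, br11] at h
      linear_combination -h / 2
    have hc01 : w0 (1,0) (0,1) = -2 * w1 (1,0) (0,1) := by
      have h := hanti (1,0) (0,1)
      rw [hc10] at h
      linear_combination h
    refine ⟨wm (0,1) (1,0), w1 (1,0) (0,1),
      fun A => w1 (0,1) (0,1) / 2 * A.1, fun U => wm (0,1) (0,1) / 2 * U.1,
      ?_, ?_, ?_, ?_, ?_⟩
    · intro c x y; simp; ring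
    · intro c x y; simp; ring
    · intro A B
      dsimp only
      rw [E0 A B]
      simp [wB0, br00]
      linear_combination A.1 * B.1 * hd1 + A.1 * B.2 * hc01 + A.2 * B.1 * hc10 +
        A.2 * B.2 * hd2
    · intro A U
      dsimp only
      rw [Em A U]
      simp [wAm, br01]
      linear_combination A.1 * U.1 * hm11 + A.1 * U.2 * hm12
    · intro U V
      dsimp only
      rw [E1 U V]
      simp [wB1, br11]
      linear_combination U.1 * V.1 * hs11 + U.2 * V.1 * hsb
  · rintro a b ⟨f0, f1, hf0, hf1, e0, em, e1⟩
    constructor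
    · have h := em (0,1) (1,0)
      rw [lin_eval hf1 (br01 (0,1) (1,0))] at h
      simp [wAm, br01] at h
      linear_combination h
    · have h := e0 (1,0) (0,1)
      rw [lin_eval hf0 (br00 (1,0) (0,1))] at h
      simp [wB0, br00] at h
      linear_combination h
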